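/- arXiv:2004.03582 — 3 statements merged into one kernel-verified Lean document; each statement's English description precedes it below -/
import Mathlib

section
/- Equality holds in the inequality H(∑_k ρ_k) ≤ ∑_k H(ρ_k) + S({Tr ρ_k}) if the supports of the positive trace-class operators ρ_k are mutually orthogonal. -/
open scoped ENNReal
open ContinuousLinearMap

noncomputable section

/-- η(x) = −x ln x (with η(0) = 0, since Real.log 0 = 0). -/
def eta (x : ℝ) : ℝ := - x * Real.log x

/-- The binary entropy h₂(p) = η(p) + η(1−p). -/
def binEnt (p : ℝ) : ℝ := eta p + eta (1 - p)

/-- g(x) = (1+x) h₂(x/(1+x)). -/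
def gAFW (x : ℝ) : ℝ := (1 + x) * binEnt (x / (1 + x))

/-- Extended Shannon entropy S({x_k}) = ∑_k η(x_k) − η(∑_k x_k), as a value in [0,∞]
(for nonnegative sequences with ∑ x_k ≤ 1 all the terms η(x_k) are nonnegative). -/
def shEntExt (x : ℕ → ℝ) : ℝ≥0∞ :=
  (∑' k, ENNReal.ofReal (eta (x k))) - ENNReal.ofReal (eta (∑' k, x k))

variable {E F : Type*} [NormedAddCommGroup E] [InnerProductSpace ℂ E] [CompleteSpace E]
  [NormedAddCommGroup F] [InnerProductSpace ℂ F] [CompleteSpace F]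

/-- The trace of a (positive) operator computed w.r.t. a Hilbert basis, with values in [0,∞].
For positive operators this is basis-independent and equals the trace. -/
def traceWith {ι : Type*} (b : HilbertBasis ι ℂ E) (T : E →L[ℂ] E) : ℝ≥0∞ :=
  ∑' i, ENNReal.ofReal ((inner ℂ (b i) (T (b i)) : ℂ)).re

/-- The von Neumann entropy H(ρ) = Tr η(ρ), via the continuous functional calculus. -/
def vnEnt {ι : Type*} (b : HilbertBasis ι ℂ E) (ρ : E →L[ℂ] E) : ℝ≥0∞ :=
  traceWith b (cfc eta ρ)

/-- The homogeneous extension of the entropy, H(ρ) = Tr η(ρ) − η(Tr ρ),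
for positive operators in the unit ball of the trace class. -/
def vnEntExt {ι : Type*} (b : HilbertBasis ι ℂ E) (ρ : E →L[ℂ] E) : ℝ≥0∞ :=
  vnEnt b ρ - ENNReal.ofReal (eta (traceWith b ρ).toReal)

/-- The rank-one operator |x⟩⟨y|. -/
def rankOne (x y : E) : E →L[ℂ] E := (innerSL ℂ y).smulRight x

/-- A state (density operator): a positive operator of unit trace. -/
def IsState {ι : Type*} (b : HilbertBasis ι ℂ E) (ρ : E →L[ℂ] E) : Prop :=
  ρ.IsPositive ∧ traceWith b ρ = 1

set_option linter.unusedSectionVars false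

lemma eta_continuous : Continuous eta := by
  have : eta = fun x => -(x * Real.log x) := by funext x; simp [eta]
  rw [this]; exact Real.continuous_mul_log.neg


lemma eta_nonneg {x : ℝ} (h0 : 0 ≤ x) (h1 : x ≤ 1) : 0 ≤ eta x := by
  have := Real.log_nonpos h0 h1
  simp only [eta]; nlinarith

lemma eta_add_le {x y : ℝ} (hx : 0 ≤ x) (hy : 0 ≤ y) : eta (x + y) ≤ eta x + eta y := by
  have h1 : -x * Real.log (x + y) ≤ eta x := by
    rcases eq_or_lt_of_le hx with rfl | hx'
    · simp [eta]
    · have : Real.log x ≤ Real.log (x + y) := Real.log_le_log hx' (by linarith)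
      simp only [eta]; nlinarith
  have h2 : -y * Real.log (x + y) ≤ eta y := by
    rcases eq_or_lt_of_le hy with rfl | hy'
    · simp [eta]
    · have : Real.log y ≤ Real.log (x + y) := Real.log_le_log hy' (by linarith)
      simp only [eta]; nlinarith
  calc eta (x + y) = -x * Real.log (x + y) + -y * Real.log (x + y) := by simp only [eta]; ring
    _ ≤ eta x + eta y := add_le_add h1 h2

lemma eta_sum_le {ι : Type*} (s : Finset ι) (t : ι → ℝ) (ht : ∀ i, 0 ≤ t i) :
    eta (∑ i ∈ s, t i) ≤ ∑ i ∈ s, eta (t i) := by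
  classical
  induction s using Finset.cons_induction with
  | empty => simp [eta]
  | cons j s hj ih =>
      rw [Finset.sum_cons, Finset.sum_cons]
      calc eta (t j + ∑ i ∈ s, t i) ≤ eta (t j) + eta (∑ i ∈ s, t i) :=
            eta_add_le (ht j) (Finset.sum_nonneg fun i _ => ht i)
        _ ≤ eta (t j) + ∑ i ∈ s, eta (t i) := by gcongr

lemma traceWith_sum {ι κ : Type*} (b : HilbertBasis ι ℂ E) (s : Finset κ)
    (T : κ → (E →L[ℂ] E)) (hT : ∀ k, (T k).IsPositive) :
    traceWith b (∑ k ∈ s, T k) = ∑ k ∈ s, traceWith b (T k) := by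
  unfold traceWith
  have hdiag : ∀ j, ((inner ℂ (b j) ((∑ k ∈ s, T k) (b j)) : ℂ)).re
      = ∑ k ∈ s, ((inner ℂ (b j) (T k (b j)) : ℂ)).re := by
    intro j
    rw [ContinuousLinearMap.sum_apply, inner_sum]
    exact Complex.re_sum s _
  calc ∑' i, ENNReal.ofReal ((inner ℂ (b i) ((∑ k ∈ s, T k) (b i)) : ℂ)).re
      = ∑' i, ∑ k ∈ s, ENNReal.ofReal ((inner ℂ (b i) (T k (b i)) : ℂ)).re := by
        congr 1; funext i
        rw [hdiag i]
        exact ENNReal.ofReal_sum_of_nonneg (fun k _ => (hT k).re_inner_nonneg_right _)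
    _ = ∑ k ∈ s, ∑' i, ENNReal.ofReal ((inner ℂ (b i) (T k (b i)) : ℂ)).re :=
        Summable.tsum_finsetSum fun k _ => ENNReal.summable

lemma opNorm_le_traceWith {ι : Type*} (b : HilbertBasis ι ℂ E) (ρ : E →L[ℂ] E)
    (hρ : 0 ≤ ρ) (hfin : traceWith b ρ ≠ ⊤) : ‖ρ‖ ≤ (traceWith b ρ).toReal := by
  obtain ⟨s, hs0, hss⟩ : ∃ s : E →L[ℂ] E, 0 ≤ s ∧ s * s = ρ := by
    refine ⟨cfc Real.sqrt ρ, cfc_nonneg fun x _ => Real.sqrt_nonneg x, ?_⟩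
    rw [← cfc_mul Real.sqrt Real.sqrt ρ]
    calc cfc (fun x => Real.sqrt x * Real.sqrt x) ρ
        = cfc (fun x : ℝ => x) ρ :=
          cfc_congr fun x hx => Real.mul_self_sqrt (spectrum_nonneg_of_nonneg hρ hx)
      _ = ρ := cfc_id' ℝ ρ
  have hsa : IsSelfAdjoint s := IsSelfAdjoint.of_nonneg hs0
  have hmove : ∀ x y : E, (inner ℂ (s x) y : ℂ) = inner ℂ x (s y) := by
    intro x y
    conv_lhs => rw [← hsa.adjoint_eq]
    exact ContinuousLinearMap.adjoint_inner_left _ _ _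
  have hdiag : ∀ x : E, ((inner ℂ x (ρ x) : ℂ)).re = ‖s x‖ ^ 2 := by
    intro x
    rw [← hss, ContinuousLinearMap.mul_apply, ← hmove x (s x),
      inner_self_eq_norm_sq_to_K (𝕜 := ℂ)]
    simp [← Complex.ofReal_pow]
  have htr : traceWith b ρ = ∑' i, ENNReal.ofReal (‖s (b i)‖ ^ 2) := by
    unfold traceWith; congr 1; funext i; rw [hdiag]
  have hterm : ∀ z : ℂ, ((starRingEnd ℂ) z * z).re = ‖z‖ ^ 2 := by
    intro z
    rw [← Complex.normSq_eq_conj_mul_self]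
    simp [Complex.normSq_eq_norm_sq, ← Complex.ofReal_pow]
  have key : ∀ x : E, ENNReal.ofReal (‖s x‖ ^ 2) ≤ traceWith b ρ * ENNReal.ofReal (‖x‖ ^ 2) := by
    intro x
    have hP : HasSum (fun i => (inner ℂ (s x) (b i) : ℂ) * inner ℂ (b i) (s x)) (inner ℂ (s x) (s x)) :=
      b.hasSum_inner_mul_inner (s x) (s x)
    have hre : HasSum (fun i => ‖(inner ℂ (b i) (s x) : ℂ)‖ ^ 2) (‖s x‖ ^ 2) := by
      have h2 := hP.mapL Complex.reCLM
      convert h2 using 2 with i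
      · rw [← inner_conj_symm (s x) (b i)]
        exact (hterm _).symm
      · show ‖s x‖ ^ 2 = (inner ℂ (s x) (s x) : ℂ).re
        rw [inner_self_eq_norm_sq_to_K (𝕜 := ℂ)]
        simp [← Complex.ofReal_pow]
    have h1 : ENNReal.ofReal (‖s x‖ ^ 2) = ∑' i, ENNReal.ofReal (‖(inner ℂ (b i) (s x) : ℂ)‖ ^ 2) := by
      rw [← hre.tsum_eq]
      exact ENNReal.ofReal_tsum_of_nonneg (fun i => by positivity) hre.summable
    rw [h1, htr, ← ENNReal.tsum_mul_right]
    refine ENNReal.tsum_le_tsum fun i => ?_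
    rw [← ENNReal.ofReal_mul (by positivity)]
    refine ENNReal.ofReal_le_ofReal ?_
    have hcs : ‖(inner ℂ (b i) (s x) : ℂ)‖ ≤ ‖s (b i)‖ * ‖x‖ := by
      rw [← hmove]
      exact norm_inner_le_norm _ _
    calc ‖(inner ℂ (b i) (s x) : ℂ)‖ ^ 2 ≤ (‖s (b i)‖ * ‖x‖) ^ 2 := by
          have h0 : (0:ℝ) ≤ ‖(inner ℂ (b i) (s x) : ℂ)‖ := norm_nonneg _
          nlinarith
      _ = ‖s (b i)‖ ^ 2 * ‖x‖ ^ 2 := by ring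
  set t := (traceWith b ρ).toReal with ht
  have ht0 : 0 ≤ t := ENNReal.toReal_nonneg
  have hsq : ∀ x : E, ‖s x‖ ^ 2 ≤ t * ‖x‖ ^ 2 := by
    intro x
    have hk := key x
    rw [← ENNReal.ofReal_toReal hfin, ← ht, ← ENNReal.ofReal_mul ht0] at hk
    exact (ENNReal.ofReal_le_ofReal_iff (by positivity)).mp hk
  refine ρ.opNorm_le_bound ht0 fun x => ?_
  have h1 : ‖ρ x‖ ^ 2 ≤ (t * ‖x‖) ^ 2 := by
    have e : ρ x = s (s x) := by rw [← hss]; rfl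
    rw [e]
    calc ‖s (s x)‖ ^ 2 ≤ t * ‖s x‖ ^ 2 := hsq (s x)
      _ ≤ t * (t * ‖x‖ ^ 2) := by
          have := hsq x
          nlinarith
      _ = (t * ‖x‖) ^ 2 := by ring
  have h2 := Real.sqrt_le_sqrt h1
  rwa [Real.sqrt_sq (norm_nonneg _), Real.sqrt_sq (by positivity)] at h2

section PolyAux
variable {R : Type*} [Ring R] [Algebra ℝ R]

lemma pow_add_of_orth {a c : R} (h1 : a * c = 0) (h2 : c * a = 0) (n : ℕ) :
    (a + c) ^ (n + 1) = a ^ (n + 1) + c ^ (n + 1) := by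
  induction n with
  | zero => simp
  | succ n ih =>
      have ha : a ^ (n + 1) * c = 0 := by
        rw [pow_succ, mul_assoc, h1, mul_zero]
      have hc : c ^ (n + 1) * a = 0 := by
        rw [pow_succ, mul_assoc, h2, mul_zero]
      calc (a + c) ^ (n + 2) = (a + c) ^ (n + 1) * (a + c) := by rw [pow_succ]
        _ = (a ^ (n + 1) + c ^ (n + 1)) * (a + c) := by rw [ih]
        _ = a ^ (n + 2) + (a ^ (n + 1) * c + (c ^ (n + 1) * a + c ^ (n + 2))) := by
            rw [add_mul, mul_add, mul_add, ← pow_succ, ← pow_succ]; ring_nf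
            abel
        _ = a ^ (n + 2) + c ^ (n + 2) := by rw [ha, hc]; abel

lemma aeval_add_of_orth {a c : R} (h1 : a * c = 0) (h2 : c * a = 0) (p : Polynomial ℝ) :
    Polynomial.aeval (a + c) p + algebraMap ℝ R (p.coeff 0)
      = Polynomial.aeval a p + Polynomial.aeval c p := by
  induction p using Polynomial.induction_on with
  | C r => simp [Polynomial.aeval_C]
  | add p q hp hq =>
      simp only [map_add, Polynomial.coeff_add]
      rw [add_add_add_comm, hp, hq, add_add_add_comm]
  | monomial m r _ =>
      have hco : (Polynomial.C r * Polynomial.X ^ (m + 1)).coeff 0 = 0 := by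
        simp [Polynomial.coeff_C_mul, Polynomial.coeff_X_pow]
      simp only [map_mul, Polynomial.aeval_C, map_pow, Polynomial.aeval_X, hco, map_zero,
        add_zero]
      rw [pow_add_of_orth h1 h2 m, mul_add]

end PolyAux

lemma eta_poly_approx {M : ℝ} (hM : 0 ≤ M) {ε : ℝ} (hε : 0 < ε) :
    ∃ p : Polynomial ℝ, p.coeff 0 = 0 ∧ ∀ x ∈ Set.Icc 0 M, |eta x - p.eval x| ≤ ε := by
  have h0M : (0 : ℝ) ∈ Set.Icc 0 M := ⟨le_refl _, hM⟩
  set f : C(Set.Icc (0:ℝ) M, ℝ) :=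
    ⟨fun z => eta z, eta_continuous.comp continuous_subtype_val⟩ with hf
  have hmem : f ∈ closure ((polynomialFunctions (Set.Icc (0:ℝ) M)) : Set C(Set.Icc (0:ℝ) M, ℝ)) := by
    have := polynomialFunctions_closure_eq_top 0 M
    have : f ∈ (polynomialFunctions (Set.Icc (0:ℝ) M)).topologicalClosure := by
      rw [this]; trivial
    exact this
  obtain ⟨g, hgS, hdist⟩ := Metric.mem_closure_iff.mp hmem (ε / 2) (by linarith)
  rw [polynomialFunctions_coe] at hgS
  obtain ⟨q, rfl⟩ := hgS
  have hq : ∀ z : Set.Icc (0:ℝ) M, |eta z - q.eval (z : ℝ)| < ε / 2 := by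
    intro z
    have h1 : dist (f z) (Polynomial.toContinuousMapOnAlgHom _ q z) ≤ _ :=
      ContinuousMap.dist_apply_le_dist z
    have h2 := lt_of_le_of_lt h1 hdist
    simpa [hf, Real.dist_eq, Polynomial.toContinuousMapOnAlgHom_apply,
      Polynomial.toContinuousMapOn_apply, Polynomial.toContinuousMap_apply] using h2
  refine ⟨q - Polynomial.C (q.eval 0), ?_, ?_⟩
  · simp [Polynomial.coeff_sub, Polynomial.coeff_C, Polynomial.coeff_zero_eq_eval_zero]
  · intro x hx
    have e1 := hq ⟨x, hx⟩
    have e2 := hq ⟨0, h0M⟩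
    have heta0 : eta 0 = 0 := by simp [eta]
    rw [heta0] at e2
    simp only [Polynomial.eval_sub, Polynomial.eval_C]
    have : |eta x - (q.eval x - q.eval 0)| ≤ |eta x - q.eval x| + |q.eval 0| := by
      have := abs_add_le (eta x - q.eval x) (q.eval 0)
      calc |eta x - (q.eval x - q.eval 0)| = |eta x - q.eval x + q.eval 0| := by ring_nf
        _ ≤ |eta x - q.eval x| + |q.eval 0| := abs_add_le _ _
    have e2' : |q.eval 0| < ε / 2 := by
      have := e2
      rwa [zero_sub, abs_neg] at this
    calc |eta x - (q.eval x - q.eval 0)| ≤ |eta x - q.eval x| + |q.eval 0| := this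
      _ ≤ ε / 2 + ε / 2 := by
          exact add_le_add (le_of_lt e1) (le_of_lt e2')
      _ = ε := by ring

lemma cfc_eta_add_of_orth [Nontrivial E] {a c : E →L[ℂ] E} (ha : 0 ≤ a) (hc : 0 ≤ c)
    (h : a * c = 0) : cfc eta (a + c) = cfc eta a + cfc eta c := by
  have h2 : c * a = 0 := by
    have := congrArg star h
    rwa [star_mul, (IsSelfAdjoint.of_nonneg ha).star_eq, (IsSelfAdjoint.of_nonneg hc).star_eq,
      star_zero] at this
  have hac : 0 ≤ a + c := add_nonneg ha hc
  set M := ‖a‖ + ‖c‖ with hMdef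
  have hM : 0 ≤ M := by positivity
  have hsp : ∀ x : E →L[ℂ] E, 0 ≤ x → ‖x‖ ≤ M → spectrum ℝ x ⊆ Set.Icc 0 M := by
    intro x hx hnx t ht
    exact ⟨spectrum_nonneg_of_nonneg hx ht,
      le_trans (le_trans (le_abs_self t) (spectrum.norm_le_norm_of_mem ht)) hnx⟩
  have key : ∀ ε : ℝ, 0 < ε →
      ‖cfc eta (a + c) - (cfc eta a + cfc eta c)‖ ≤ 3 * ε := by
    intro ε hε
    obtain ⟨p, hp0, hpb⟩ := eta_poly_approx hM hε
    have bound : ∀ x : E →L[ℂ] E, 0 ≤ x → ‖x‖ ≤ M →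
        ‖cfc eta x - cfc p.eval x‖ ≤ ε := by
      intro x hx hnx
      rw [← cfc_sub eta p.eval x eta_continuous.continuousOn
        (Polynomial.continuous p).continuousOn]
      refine norm_cfc_le hε.le fun t ht => ?_
      rw [Real.norm_eq_abs]
      exact hpb t (hsp x hx hnx ht)
    have hpoly : cfc p.eval (a + c) = cfc p.eval a + cfc p.eval c := by
      rw [cfc_polynomial p (a + c) (IsSelfAdjoint.of_nonneg hac),
        cfc_polynomial p a (IsSelfAdjoint.of_nonneg ha),
        cfc_polynomial p c (IsSelfAdjoint.of_nonneg hc)]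
      have := aeval_add_of_orth h h2 p
      rwa [hp0, map_zero, add_zero] at this
    have hd : cfc eta (a + c) - (cfc eta a + cfc eta c)
        = (cfc eta (a + c) - cfc p.eval (a + c))
          - ((cfc eta a - cfc p.eval a) + (cfc eta c - cfc p.eval c)) := by
      rw [hpoly]; abel
    rw [hd]
    calc ‖(cfc eta (a + c) - cfc p.eval (a + c))
          - ((cfc eta a - cfc p.eval a) + (cfc eta c - cfc p.eval c))‖
        ≤ ‖cfc eta (a + c) - cfc p.eval (a + c)‖
          + (‖cfc eta a - cfc p.eval a‖ + ‖cfc eta c - cfc p.eval c‖) :=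
          (norm_sub_le _ _).trans (by gcongr; exact norm_add_le _ _)
      _ ≤ ε + (ε + ε) := by
          refine add_le_add (bound _ hac (norm_add_le a c)) (add_le_add ?_ ?_)
          · exact bound a ha (by rw [hMdef]; linarith [norm_nonneg c])
          · exact bound c hc (by rw [hMdef]; linarith [norm_nonneg a])
      _ = 3 * ε := by ring
  have : ‖cfc eta (a + c) - (cfc eta a + cfc eta c)‖ ≤ 0 := by
    by_contra h'
    push_neg at h'
    have := key (‖cfc eta (a + c) - (cfc eta a + cfc eta c)‖ / 6) (by linarith)
    linarith
  have := norm_le_zero_iff.mp this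
  exact sub_eq_zero.mp this

lemma traceWith_smul_le {ι : Type*} (b : HilbertBasis ι ℂ E) {ρ S : E →L[ℂ] E}
    (hρpos : ρ.IsPositive) {c : ℝ} (hc : 0 ≤ c) (hle : c • ρ ≤ S) :
    ENNReal.ofReal c * traceWith b ρ ≤ traceWith b S := by
  have hpos : (S - c • ρ).IsPositive := (ContinuousLinearMap.le_def _ _).mp hle
  have hdiag : ∀ j, c * ((inner ℂ (b j) (ρ (b j)) : ℂ)).re ≤ ((inner ℂ (b j) (S (b j)) : ℂ)).re := by
    intro j
    have h0 : (0:ℝ) ≤ ((inner ℂ (b j) ((S - c • ρ) (b j)) : ℂ)).re := hpos.re_inner_nonneg_right _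
    rw [ContinuousLinearMap.sub_apply, ContinuousLinearMap.smul_apply, inner_sub_right] at h0
    have e : (inner ℂ (b j) (c • ρ (b j)) : ℂ) = (c : ℂ) * inner ℂ (b j) (ρ (b j)) := by
      rw [← Complex.coe_smul]
      exact inner_smul_right _ _ _
    rw [e] at h0
    have := Complex.re_ofReal_mul c (inner ℂ (b j) (ρ (b j)) : ℂ)
    rw [Complex.sub_re, this] at h0
    linarith
  unfold traceWith
  rw [← ENNReal.tsum_mul_left]
  refine ENNReal.tsum_le_tsum fun j => ?_
  rw [← ENNReal.ofReal_mul hc]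
  exact ENNReal.ofReal_le_ofReal (hdiag j)

lemma spectrum_subset_Icc [Nontrivial E] {ι : Type*} (b : HilbertBasis ι ℂ E)
    {ρ : E →L[ℂ] E} (hρ : 0 ≤ ρ) (hfin : traceWith b ρ ≠ ⊤) :
    spectrum ℝ ρ ⊆ Set.Icc 0 (traceWith b ρ).toReal := by
  intro x hx
  exact ⟨spectrum_nonneg_of_nonneg hρ hx,
    le_trans (le_trans (le_abs_self x) (spectrum.norm_le_norm_of_mem hx))
      (opNorm_le_traceWith b ρ hρ hfin)⟩

lemma cfc_eta_nonneg [Nontrivial E] {ι : Type*} (b : HilbertBasis ι ℂ E)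
    {ρ : E →L[ℂ] E} (hρ : 0 ≤ ρ) (h1 : traceWith b ρ ≤ 1) : 0 ≤ cfc eta ρ := by
  have hfin : traceWith b ρ ≠ ⊤ := (lt_of_le_of_lt h1 ENNReal.one_lt_top).ne
  have ht1 : (traceWith b ρ).toReal ≤ 1 := by
    have := ENNReal.toReal_mono ENNReal.one_ne_top h1
    simpa using this
  refine cfc_nonneg fun x hx => ?_
  obtain ⟨hx0, hxt⟩ := spectrum_subset_Icc b hρ hfin hx
  exact eta_nonneg hx0 (hxt.trans ht1)

lemma ofReal_eta_traceWith_le [Nontrivial E] {ι : Type*} (b : HilbertBasis ι ℂ E)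
    {ρ : E →L[ℂ] E} (hρ : 0 ≤ ρ) (h1 : traceWith b ρ ≤ 1) :
    ENNReal.ofReal (eta (traceWith b ρ).toReal) ≤ traceWith b (cfc eta ρ) := by
  have hfin : traceWith b ρ ≠ ⊤ := (lt_of_le_of_lt h1 ENNReal.one_lt_top).ne
  set t := (traceWith b ρ).toReal with htdef
  have ht0 : 0 ≤ t := ENNReal.toReal_nonneg
  have ht1 : t ≤ 1 := by
    have := ENNReal.toReal_mono ENNReal.one_ne_top h1
    simpa using this
  rcases eq_or_lt_of_le ht0 with h0 | h0
  · rw [← h0]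
    simp [eta]
  · set c := -Real.log t with hcdef
    have hc0 : 0 ≤ c := by
      have := Real.log_nonpos (le_of_lt h0) ht1
      simp [hcdef]; linarith
    have hsp := spectrum_subset_Icc b hρ hfin
    have hle : c • ρ ≤ cfc eta ρ := by
      rw [← sub_nonneg]
      have e : cfc eta ρ - c • ρ = cfc (fun x => eta x - c * x) ρ := by
        rw [cfc_sub eta (fun x => c * x) ρ eta_continuous.continuousOn (by fun_prop),
          cfc_const_mul_id c ρ (IsSelfAdjoint.of_nonneg hρ)]
      rw [e]
      refine cfc_nonneg fun x hx => ?_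
      obtain ⟨hx0, hxt⟩ := hsp hx
      rcases eq_or_lt_of_le hx0 with hx0' | hx0'
      · rw [← hx0']; simp [eta]
      · have hlog : Real.log x ≤ Real.log t := Real.log_le_log hx0' hxt
        simp only [eta, hcdef]
        nlinarith
    calc ENNReal.ofReal (eta t) = ENNReal.ofReal c * ENNReal.ofReal t := by
          rw [← ENNReal.ofReal_mul hc0]
          congr 1
          simp only [eta, hcdef]; ring
      _ = ENNReal.ofReal c * traceWith b ρ := by rw [htdef, ENNReal.ofReal_toReal hfin]
      _ ≤ traceWith b (cfc eta ρ) :=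
          traceWith_smul_le b ((ContinuousLinearMap.nonneg_iff_isPositive ρ).mp hρ) hc0 hle

lemma cfc_eta_sum [Nontrivial E] {n : ℕ} (ρ : Fin n → (E →L[ℂ] E))
    (hpos : ∀ k, 0 ≤ ρ k) (horth : ∀ k j, k ≠ j → ρ k * ρ j = 0) (s : Finset (Fin n)) :
    cfc eta (∑ k ∈ s, ρ k) = ∑ k ∈ s, cfc eta (ρ k) := by
  induction s using Finset.cons_induction with
  | empty =>
      simp only [Finset.sum_empty]
      have h0 : ‖cfc eta (0 : E →L[ℂ] E)‖ ≤ 0 := by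
        refine norm_cfc_le le_rfl fun x hx => ?_
        rw [spectrum.zero_eq] at hx
        rw [Set.mem_singleton_iff.mp hx]
        simp [eta]
      exact norm_le_zero_iff.mp h0
  | cons j s hj ih =>
      rw [Finset.sum_cons, Finset.sum_cons,
        cfc_eta_add_of_orth (hpos j) (Finset.sum_nonneg fun k _ => hpos k) ?_, ih]
      rw [Finset.mul_sum]
      refine Finset.sum_eq_zero fun k hk => ?_
      exact horth j k (fun h => hj (h ▸ hk))

/-- equality holds in H(∑_k ρ_k) ≤ ∑_k H(ρ_k) + S({Tr ρ_k}) if the supports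
of the positive operators ρ_k are mutually orthogonal (equivalently ρ_k ρ_j = 0 for k ≠ j). -/
theorem vnEntExt_sum_eq_of_orthogonal {A : Type*} [NormedAddCommGroup A]
    [InnerProductSpace ℂ A] [CompleteSpace A] (b : HilbertBasis ℕ ℂ A) {n : ℕ}
    (ρ : Fin n → (A →L[ℂ] A))
    (hρ : ∀ k, (ρ k).IsPositive) (hρ1 : ∀ k, traceWith b (ρ k) ≤ 1)
    (hsum : ∑ k, traceWith b (ρ k) ≤ 1)
    (horth : ∀ k j, k ≠ j → (ρ k) ∘L (ρ j) = 0) :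
    vnEntExt b (∑ k, ρ k) =
      ∑ k, vnEntExt b (ρ k) +
        ((∑ k, ENNReal.ofReal (eta ((traceWith b (ρ k)).toReal))) -
          ENNReal.ofReal (eta (∑ k, (traceWith b (ρ k)).toReal))) := by
  rcases subsingleton_or_nontrivial A with hA | hA
  · have hall : ∀ T : A →L[ℂ] A, traceWith b T = 0 := by
      intro T
      unfold traceWith
      have hz : ∀ i : ℕ, (inner ℂ (b i) (T (b i)) : ℂ) = 0 := by
        intro i
        have : (b i : A) = 0 := Subsingleton.elim _ _
        rw [this]
        simp
      simp [hz]
    simp [vnEntExt, vnEnt, hall, eta]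
  · have hpos : ∀ k, 0 ≤ ρ k := fun k =>
      (ContinuousLinearMap.nonneg_iff_isPositive (ρ k)).mpr (hρ k)
    have horth' : ∀ k j, k ≠ j → ρ k * ρ j = 0 := horth
    have hfink : ∀ k, traceWith b (ρ k) ≠ ⊤ := fun k =>
      (lt_of_le_of_lt (hρ1 k) ENNReal.one_lt_top).ne
    have htk1 : ∀ k, (traceWith b (ρ k)).toReal ≤ 1 := fun k => by
      have := ENNReal.toReal_mono ENNReal.one_ne_top (hρ1 k)
      simpa using this
    -- trace of the sum
    have hT : traceWith b (∑ k, ρ k) = ∑ k, traceWith b (ρ k) :=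
      traceWith_sum b Finset.univ ρ hρ
    have htT : (traceWith b (∑ k, ρ k)).toReal = ∑ k, (traceWith b (ρ k)).toReal := by
      rw [hT]
      exact ENNReal.toReal_sum fun k _ => hfink k
    -- entropy of the sum
    have hcfc : ∀ k, 0 ≤ cfc eta (ρ k) := fun k => cfc_eta_nonneg b (hpos k) (hρ1 k)
    have hHsum : vnEnt b (∑ k, ρ k) = ∑ k, vnEnt b (ρ k) := by
      unfold vnEnt
      rw [cfc_eta_sum ρ hpos horth' Finset.univ]
      exact traceWith_sum b Finset.univ _
        (fun k => (ContinuousLinearMap.nonneg_iff_isPositive _).mp (hcfc k))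
    -- notation
    set Hk := fun k => vnEnt b (ρ k) with hHk
    set ek := fun k => ENNReal.ofReal (eta ((traceWith b (ρ k)).toReal)) with hek
    have hekfin : ∑ k, ek k ≠ ⊤ :=
      (ENNReal.sum_lt_top.mpr fun k _ => ENNReal.ofReal_lt_top).ne
    have hekHk : ∀ k, ek k ≤ Hk k := fun k =>
      ofReal_eta_traceWith_le b (hpos k) (hρ1 k)
    have heke : ENNReal.ofReal (eta (∑ k, (traceWith b (ρ k)).toReal)) ≤ ∑ k, ek k := by
      calc ENNReal.ofReal (eta (∑ k, (traceWith b (ρ k)).toReal))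
          ≤ ENNReal.ofReal (∑ k, eta ((traceWith b (ρ k)).toReal)) :=
            ENNReal.ofReal_le_ofReal
              (eta_sum_le Finset.univ _ fun k => ENNReal.toReal_nonneg)
        _ = ∑ k, ek k := ENNReal.ofReal_sum_of_nonneg fun k _ =>
              eta_nonneg ENNReal.toReal_nonneg (htk1 k)
    have h1 : ∑ k, (Hk k - ek k) = ∑ k, Hk k - ∑ k, ek k := by
      refine ENNReal.eq_sub_of_add_eq hekfin ?_
      rw [← Finset.sum_add_distrib]
      exact Finset.sum_congr rfl fun k _ => tsub_add_cancel_of_le (hekHk k)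
    unfold vnEntExt
    rw [hHsum, htT, h1, tsub_add_tsub_cancel (Finset.sum_le_sum fun k _ => hekHk k) heke]
end
end

section
/- Suppose there exists a sequence {h_k} of nonnegative numbers such that ∑_k h_k V_k*V_k is a bounded operator and ∑_k e^{−h_k} < +∞. Then the function φ ↦ S({‖V_k φ‖²}_k) is bounded on the unit sphere of H_A. -/
open scoped ENNReal
open ContinuousLinearMap

noncomputable section

variable {E F : Type*} [NormedAddCommGroup E] [InnerProductSpace ℂ E] [CompleteSpace E]
  [NormedAddCommGroup F] [InnerProductSpace ℂ F] [CompleteSpace F]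

/-- Key pointwise bound: η(p) ≤ h·p + e^{−h} for p ≥ 0. -/
lemma eta_le_aux (p t : ℝ) (hp : 0 ≤ p) : eta p ≤ t * p + Real.exp (-t) := by
  rcases eq_or_lt_of_le hp with rfl | hp0
  · simp only [eta, Real.log_zero, mul_zero, neg_zero, zero_mul, mul_zero, zero_add]
    positivity
  · have hte : (0:ℝ) < p * Real.exp t := by positivity
    have hlog : Real.log (1 / (p * Real.exp t)) ≤ 1 / (p * Real.exp t) - 1 :=
      Real.log_le_sub_one_of_pos (by positivity)
    rw [Real.log_div one_ne_zero hte.ne', Real.log_one, zero_sub] at hlog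
    have key : p * (- Real.log (p * Real.exp t)) ≤ Real.exp (-t) := by
      have h1 : p * (- Real.log (p * Real.exp t)) ≤ p * (1 / (p * Real.exp t) - 1) :=
        mul_le_mul_of_nonneg_left hlog hp
    -- simplify RHS
      have h2 : p * (1 / (p * Real.exp t) - 1) = Real.exp (-t) - p := by
        field_simp [Real.exp_neg]
        rw [mul_sub, ← Real.exp_add, add_neg_cancel, Real.exp_zero]; ring
      have := h1.trans_eq h2
      linarith
    have hsplit : eta p = t * p + p * (- Real.log (p * Real.exp t)) := by
      rw [Real.log_mul hp0.ne' (Real.exp_pos t).ne', Real.log_exp]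
      unfold eta; ring
    rw [hsplit]
    linarith

/-- if there is a nonnegative sequence {h_k} with ∑_k h_k V_k*V_k bounded
(as a quadratic form) and ∑_k e^{−h_k} < ∞, then φ ↦ S({‖V_k φ‖²}_k) is bounded on the
unit sphere. -/
theorem shEntExt_bounded_on_sphere {A B : Type*} [NormedAddCommGroup A]
    [InnerProductSpace ℂ A] [CompleteSpace A] [NormedAddCommGroup B]
    [InnerProductSpace ℂ B] [CompleteSpace B]
    (V : ℕ → (A →L[ℂ] B))
    (hKsum : ∀ x : A, Summable (fun k => ‖V k x‖ ^ 2))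
    (hK : ∀ x : A, (∑' k, ‖V k x‖ ^ 2) ≤ ‖x‖ ^ 2)
    (h : ℕ → ℝ) (hh : ∀ k, 0 ≤ h k)
    (M : ℝ)
    (hbddsum : ∀ x : A, Summable (fun k => h k * ‖V k x‖ ^ 2))
    (hbdd : ∀ x : A, (∑' k, h k * ‖V k x‖ ^ 2) ≤ M * ‖x‖ ^ 2)
    (hexp : Summable (fun k => Real.exp (-(h k)))) :
    ∃ C : ℝ, ∀ φ : A, ‖φ‖ = 1 →
      shEntExt (fun k => ‖V k φ‖ ^ 2) ≤ ENNReal.ofReal C := by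
  classical
  set Es : ℝ := ∑' k, Real.exp (-(h k)) with hEs
  have hEnn : 0 ≤ Es := tsum_nonneg fun k => (Real.exp_pos _).le
  refine ⟨max M 0 + Es, ?_⟩
  intro φ hφ
  have hp : ∀ k, (0:ℝ) ≤ ‖V k φ‖ ^ 2 := fun k => sq_nonneg _
  have step1 : shEntExt (fun k => ‖V k φ‖ ^ 2)
      ≤ ∑' k, ENNReal.ofReal (eta (‖V k φ‖ ^ 2)) := tsub_le_self
  refine step1.trans ?_
  have step2 : ∀ k, ENNReal.ofReal (eta (‖V k φ‖ ^ 2))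
      ≤ ENNReal.ofReal (h k * ‖V k φ‖ ^ 2) + ENNReal.ofReal (Real.exp (-(h k))) := fun k =>
    (ENNReal.ofReal_le_ofReal (eta_le_aux _ _ (hp k))).trans ENNReal.ofReal_add_le
  have hsum1 : (∑' k, ENNReal.ofReal (h k * ‖V k φ‖ ^ 2)) ≤ ENNReal.ofReal (max M 0) := by
    rw [← ENNReal.ofReal_tsum_of_nonneg (fun k => mul_nonneg (hh k) (hp k)) (hbddsum φ)]
    refine ENNReal.ofReal_le_ofReal ?_
    have := hbdd φ
    rw [hφ] at this
    have : (∑' k, h k * ‖V k φ‖ ^ 2) ≤ M := by simpa using this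
    exact this.trans (le_max_left M 0)
  have hsum2 : (∑' k, ENNReal.ofReal (Real.exp (-(h k)))) = ENNReal.ofReal Es := by
    rw [hEs, ENNReal.ofReal_tsum_of_nonneg (fun k => (Real.exp_pos _).le) hexp]
  calc (∑' k, ENNReal.ofReal (eta (‖V k φ‖ ^ 2)))
      ≤ ∑' k, (ENNReal.ofReal (h k * ‖V k φ‖ ^ 2) + ENNReal.ofReal (Real.exp (-(h k)))) :=
        ENNReal.tsum_le_tsum step2
    _ = (∑' k, ENNReal.ofReal (h k * ‖V k φ‖ ^ 2))
        + ∑' k, ENNReal.ofReal (Real.exp (-(h k))) := ENNReal.tsum_add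
    _ ≤ ENNReal.ofReal (max M 0) + ENNReal.ofReal Es := by
        exact add_le_add hsum1 (le_of_eq hsum2)
    _ = ENNReal.ofReal (max M 0 + Es) :=
        (ENNReal.ofReal_add (le_max_right M 0) hEnn).symm
end
end

section
/- The extended Shannon entropy S is bounded on the set of vectors {p_k} in the positive part of the unit ball of ℓ¹ satisfying ∑_k h_k p_k ≤ C, for any fixed C > 0 and any nonnegative sequence {h_k} with ∑_k e^{−h_k} < +∞. -/
open scoped ENNReal
open ContinuousLinearMap

noncomputable section

variable {E F : Type*} [NormedAddCommGroup E] [InnerProductSpace ℂ E] [CompleteSpace E]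
  [NormedAddCommGroup F] [InnerProductSpace ℂ F] [CompleteSpace F]

/-- the extended Shannon entropy is bounded on the set of vectors {p_k} in the
positive part of the unit ball of ℓ¹ with ∑_k h_k p_k ≤ C, whenever h_k ≥ 0 and
∑_k e^{−h_k} < ∞. -/
theorem shEntExt_bounded_of_energy_constraint (h : ℕ → ℝ) (hh : ∀ k, 0 ≤ h k)
    (hexp : Summable (fun k => Real.exp (-(h k)))) (C : ℝ) (hC : 0 < C) :
    ∃ B : ℝ, ∀ p : ℕ → ℝ, (∀ k, 0 ≤ p k) → Summable p → (∑' k, p k) ≤ 1 →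
      Summable (fun k => h k * p k) → (∑' k, h k * p k) ≤ C →
      shEntExt p ≤ ENNReal.ofReal B := by
  refine ⟨C + ∑' k, Real.exp (-(h k)), fun p hp hsum hsle hhp hhpC => ?_⟩
  have key : ∀ k, eta (p k) ≤ h k * p k + Real.exp (-(h k)) := by
    intro k
    rcases eq_or_lt_of_le (hp k) with h0 | h0
    · simp [eta, ← h0]
      positivity
    · have hlog : Real.log (Real.exp (-(h k)) / p k) ≤ Real.exp (-(h k)) / p k - 1 :=
        Real.log_le_sub_one_of_pos (by positivity)
      rw [Real.log_div (Real.exp_ne_zero _) (ne_of_gt h0), Real.log_exp] at hlog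
      have := mul_le_mul_of_nonneg_left hlog (le_of_lt h0)
      rw [mul_sub, mul_sub, mul_div_cancel₀ _ (ne_of_gt h0)] at this
      unfold eta
      nlinarith [this, le_of_lt h0]
  have hnn : ∀ k, 0 ≤ h k * p k + Real.exp (-(h k)) := fun k => by
    have := mul_nonneg (hh k) (hp k); positivity
  have hsumm : Summable (fun k => h k * p k + Real.exp (-(h k))) := hhp.add hexp
  calc shEntExt p ≤ ∑' k, ENNReal.ofReal (eta (p k)) := tsub_le_self
    _ ≤ ∑' k, ENNReal.ofReal (h k * p k + Real.exp (-(h k))) :=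
        ENNReal.tsum_le_tsum fun k => ENNReal.ofReal_le_ofReal (key k)
    _ = ENNReal.ofReal (∑' k, (h k * p k + Real.exp (-(h k)))) :=
        (ENNReal.ofReal_tsum_of_nonneg hnn hsumm).symm
    _ ≤ ENNReal.ofReal (C + ∑' k, Real.exp (-(h k))) := by
        apply ENNReal.ofReal_le_ofReal
        rw [Summable.tsum_add hhp hexp]
        exact add_le_add_left hhpC _
end
end
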